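/- arXiv:2605.23249 — 3 statements merged into one kernel-verified Lean document; each statement's English description precedes it below -/
import Mathlib

section
/- Let E be a real inner product space, let z ∈ E be a unit vector, let P and N be nonempty finite sets of unit vectors in E, let A = P ∪ N, and let τ > 0. Then (min over p ∈ P of (1/2)·‖z − p‖²) − (min over n ∈ N of (1/2)·‖z − n‖²) ≤ τ · [ −(1/|P|) · ∑_{p ∈ P} log( exp(⟪z, p⟫ / τ) / ∑_{a ∈ A} exp(⟪z, a⟫ / τ) ) ]. -/
/-- Per-anchor form of the main lemma: the per-anchor refinement loss is
bounded above by `τ` times the per-anchor supervised contrastive loss. -/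
theorem refinement_le_tau_mul_supCon
    {E : Type*} [NormedAddCommGroup E] [InnerProductSpace ℝ E] [DecidableEq E]
    (z : E) (hz : ‖z‖ = 1)
    (P N : Finset E) (hP : P.Nonempty) (hN : N.Nonempty)
    (hPunit : ∀ p ∈ P, ‖p‖ = 1) (hNunit : ∀ n ∈ N, ‖n‖ = 1)
    (τ : ℝ) (hτ : 0 < τ) :
    P.inf' hP (fun p => (1 / 2 : ℝ) * ‖z - p‖ ^ 2)
      - N.inf' hN (fun n => (1 / 2 : ℝ) * ‖z - n‖ ^ 2) ≤
    τ * (-(1 / (P.card : ℝ)) *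
      ∑ p ∈ P, Real.log (Real.exp ((inner ℝ z p : ℝ) / τ) /
        ∑ a ∈ P ∪ N, Real.exp ((inner ℝ z a : ℝ) / τ))) := by
  set f : E → ℝ := fun a => (inner ℝ z a : ℝ) with hf
  set S : ℝ := ∑ a ∈ P ∪ N, Real.exp (f a / τ) with hSdef
  have hSpos : 0 < S :=
    Finset.sum_pos (fun a _ => Real.exp_pos _)
      (hP.mono Finset.subset_union_left)
  have hc : (0 : ℝ) < (P.card : ℝ) := by
    exact_mod_cast Finset.card_pos.mpr hP
  have hnorm : ∀ a ∈ P ∪ N, (1 / 2 : ℝ) * ‖z - a‖ ^ 2 = 1 - f a := by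
    intro a ha
    have h1 : ‖a‖ = 1 := by
      rcases Finset.mem_union.mp ha with h | h
      · exact hPunit a h
      · exact hNunit a h
    have h2 : ‖z - a‖ ^ 2 = ‖z‖ ^ 2 - 2 * (inner ℝ z a : ℝ) + ‖a‖ ^ 2 :=
      @norm_sub_sq_real E _ _ z a
    rw [hz, h1] at h2
    simp only [hf]
    rw [h2]; ring
  -- RHS equals τ * log S - average of f over P
  have hRHS : τ * (-(1 / (P.card : ℝ)) *
      ∑ p ∈ P, Real.log (Real.exp (f p / τ) / S))
      = τ * Real.log S - (∑ p ∈ P, f p) / (P.card : ℝ) := by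
    have hlog : ∀ p ∈ P, Real.log (Real.exp (f p / τ) / S) = f p / τ - Real.log S := by
      intro p _
      rw [Real.log_div (Real.exp_ne_zero _) hSpos.ne', Real.log_exp]
    rw [Finset.sum_congr rfl hlog, Finset.sum_sub_distrib, Finset.sum_const,
      nsmul_eq_mul, ← Finset.sum_div]
    set T := ∑ p ∈ P, f p
    field_simp
    ring
  -- inf over P ≤ 1 - average of f
  have hinfP : P.inf' hP (fun p => (1 / 2 : ℝ) * ‖z - p‖ ^ 2)
      ≤ 1 - (∑ p ∈ P, f p) / (P.card : ℝ) := by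
    have h1 : ∀ p ∈ P, P.inf' hP (fun p => (1 / 2 : ℝ) * ‖z - p‖ ^ 2) ≤ 1 - f p := by
      intro p hp
      have := Finset.inf'_le (fun p => (1 / 2 : ℝ) * ‖z - p‖ ^ 2) hp
      rwa [hnorm p (Finset.mem_union_left _ hp)] at this
    have h2 := Finset.sum_le_sum h1
    rw [Finset.sum_const, nsmul_eq_mul, Finset.sum_sub_distrib, Finset.sum_const,
      nsmul_eq_mul, mul_one] at h2
    have h3 : P.inf' hP (fun p => (1 / 2 : ℝ) * ‖z - p‖ ^ 2)
        ≤ ((P.card : ℝ) - ∑ p ∈ P, f p) / (P.card : ℝ) :=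
      (le_div_iff₀ hc).mpr (by nlinarith)
    rwa [sub_div, div_self hc.ne'] at h3
  -- 1 - τ log S ≤ inf over N
  have hinfN : 1 - τ * Real.log S
      ≤ N.inf' hN (fun n => (1 / 2 : ℝ) * ‖z - n‖ ^ 2) := by
    apply Finset.le_inf'
    intro n hn
    rw [hnorm n (Finset.mem_union_right _ hn)]
    have hle : Real.exp (f n / τ) ≤ S := by
      rw [hSdef]
      exact Finset.single_le_sum (f := fun a => Real.exp (f a / τ))
        (fun a _ => (Real.exp_pos _).le) (Finset.mem_union_right _ hn)
    have : f n / τ ≤ Real.log S := by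
      rwa [← Real.exp_le_exp, Real.exp_log hSpos]
    have : f n ≤ τ * Real.log S := by
      rw [div_le_iff₀ hτ] at this
      linarith [this]
    linarith
  rw [hRHS]
  linarith
end

section
/- Let E be a real inner product space, let I be a finite index set, and for each i ∈ I let z_i ∈ E be a unit vector with nonempty finite sets P_i and N_i of unit vectors in E, and set A_i = P_i ∪ N_i. Let τ > 0. Define the refinement loss L_ref = ∑_{i ∈ I} [ min_{p ∈ P_i} (1/2)·‖z_i − p‖² − min_{n ∈ N_i} (1/2)·‖z_i − n‖² ] and the supervised contrastive loss L_SC = ∑_{i ∈ I} [ −(1/|P_i|) · ∑_{p ∈ P_i} log( exp(⟪z_i, p⟫ / τ) / ∑_{a ∈ A_i} exp(⟪z_i, a⟫ / τ) ) ]. Then L_ref ≤ τ · L_SC. -/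
lemma key_per_anchor {E : Type*} [NormedAddCommGroup E] [InnerProductSpace ℝ E]
    [DecidableEq E]
    (z : E) (P N : Finset E) (hz : ‖z‖ = 1)
    (hP : P.Nonempty) (hN : N.Nonempty)
    (hPunit : ∀ p ∈ P, ‖p‖ = 1) (hNunit : ∀ n ∈ N, ‖n‖ = 1)
    (τ : ℝ) (hτ : 0 < τ) :
    P.inf' hP (fun p => (1 / 2 : ℝ) * ‖z - p‖ ^ 2)
      - N.inf' hN (fun n => (1 / 2 : ℝ) * ‖z - n‖ ^ 2) ≤
    τ * (-(1 / (P.card : ℝ)) *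
      ∑ p ∈ P, Real.log (Real.exp ((inner ℝ z p : ℝ) / τ) /
        ∑ a ∈ P ∪ N, Real.exp ((inner ℝ z a : ℝ) / τ))) := by
  set S : ℝ := ∑ a ∈ P ∪ N, Real.exp ((inner ℝ z a : ℝ) / τ) with hSdef
  have hSpos : 0 < S := by
    apply Finset.sum_pos (fun a _ => Real.exp_pos _)
    exact hP.mono Finset.subset_union_left
  have hc : (0 : ℝ) < (P.card : ℝ) := by exact_mod_cast hP.card_pos
  -- half squared distance equals 1 - inner for unit vectors
  have hdist : ∀ w : E, ‖w‖ = 1 → (1 / 2 : ℝ) * ‖z - w‖ ^ 2 = 1 - (inner ℝ z w : ℝ) := by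
    intro w hw
    have := @norm_sub_sq_real E _ _ z w
    rw [hz, hw] at this
    rw [this]; ring
  -- step 1 : inf over P ≤ average
  have h1 : P.inf' hP (fun p => (1 / 2 : ℝ) * ‖z - p‖ ^ 2)
      ≤ 1 - (1 / (P.card : ℝ)) * ∑ p ∈ P, (inner ℝ z p : ℝ) := by
    have havg : (P.card : ℝ) * P.inf' hP (fun p => (1 / 2 : ℝ) * ‖z - p‖ ^ 2)
        ≤ ∑ p ∈ P, ((1 / 2 : ℝ) * ‖z - p‖ ^ 2) := by
      have := Finset.card_nsmul_le_sum P (fun p => (1 / 2 : ℝ) * ‖z - p‖ ^ 2)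
        (P.inf' hP (fun p => (1 / 2 : ℝ) * ‖z - p‖ ^ 2))
        (fun i hi => Finset.inf'_le _ hi)
      simpa [nsmul_eq_mul] using this
    have hsum : ∑ p ∈ P, ((1 / 2 : ℝ) * ‖z - p‖ ^ 2)
        = (P.card : ℝ) - ∑ p ∈ P, (inner ℝ z p : ℝ) := by
      rw [Finset.sum_congr rfl (fun p hp => hdist p (hPunit p hp))]
      rw [Finset.sum_sub_distrib]
      simp
    rw [hsum] at havg
    calc P.inf' hP (fun p => (1 / 2 : ℝ) * ‖z - p‖ ^ 2)
        ≤ ((P.card : ℝ) - ∑ p ∈ P, (inner ℝ z p : ℝ)) / (P.card : ℝ) := by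
          rw [le_div_iff₀ hc]; linarith
      _ = 1 - (1 / (P.card : ℝ)) * ∑ p ∈ P, (inner ℝ z p : ℝ) := by
          field_simp
  -- step 2 : 1 - τ log S ≤ inf over N
  have h2 : 1 - τ * Real.log S ≤ N.inf' hN (fun n => (1 / 2 : ℝ) * ‖z - n‖ ^ 2) := by
    apply Finset.le_inf'
    intro n hn
    rw [hdist n (hNunit n hn)]
    have hle : Real.exp ((inner ℝ z n : ℝ) / τ) ≤ S := by
      apply Finset.single_le_sum (f := fun a => Real.exp ((inner ℝ z a : ℝ) / τ))
        (fun a _ => (Real.exp_pos _).le)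
      exact Finset.mem_union_right _ hn
    have : (inner ℝ z n : ℝ) / τ ≤ Real.log S := (Real.le_log_iff_exp_le hSpos).2 hle
    have h3 : (inner ℝ z n : ℝ) ≤ τ * Real.log S := by
      rw [div_le_iff₀ hτ] at this; linarith [this]
    linarith
  -- rewrite RHS
  have hRHS : τ * (-(1 / (P.card : ℝ)) *
      ∑ p ∈ P, Real.log (Real.exp ((inner ℝ z p : ℝ) / τ) / S))
      = τ * Real.log S - (1 / (P.card : ℝ)) * ∑ p ∈ P, (inner ℝ z p : ℝ) := by
    have hlog : ∀ p ∈ P, Real.log (Real.exp ((inner ℝ z p : ℝ) / τ) / S)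
        = (inner ℝ z p : ℝ) / τ - Real.log S := by
      intro p hp
      rw [Real.log_div (Real.exp_ne_zero _) (ne_of_gt hSpos), Real.log_exp]
    rw [Finset.sum_congr rfl hlog, Finset.sum_sub_distrib, Finset.sum_const,
      ← Finset.sum_div]
    field_simp
    ring
  rw [hRHS]
  linarith

/-- Main lemma: the refinement loss is bounded above by `τ` times the
supervised contrastive loss. -/
theorem refinement_loss_le_tau_mul_supCon_loss
    {E ι : Type*} [NormedAddCommGroup E] [InnerProductSpace ℝ E] [DecidableEq E]
    (I : Finset ι) (z : ι → E) (P N : ι → Finset E)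
    (hz : ∀ i ∈ I, ‖z i‖ = 1)
    (hP : ∀ i ∈ I, (P i).Nonempty) (hN : ∀ i ∈ I, (N i).Nonempty)
    (hPunit : ∀ i ∈ I, ∀ p ∈ P i, ‖p‖ = 1)
    (hNunit : ∀ i ∈ I, ∀ n ∈ N i, ‖n‖ = 1)
    (τ : ℝ) (hτ : 0 < τ) :
    (∑ i ∈ I.attach,
        ((P i.1).inf' (hP i.1 i.2) (fun p => (1 / 2 : ℝ) * ‖z i.1 - p‖ ^ 2)
          - (N i.1).inf' (hN i.1 i.2) (fun n => (1 / 2 : ℝ) * ‖z i.1 - n‖ ^ 2))) ≤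
    τ * ∑ i ∈ I.attach,
        (-(1 / ((P i.1).card : ℝ)) *
          ∑ p ∈ P i.1, Real.log (Real.exp ((inner ℝ (z i.1) p : ℝ) / τ) /
            ∑ a ∈ P i.1 ∪ N i.1, Real.exp ((inner ℝ (z i.1) a : ℝ) / τ))) := by
  rw [Finset.mul_sum]
  apply Finset.sum_le_sum
  intro i _
  exact key_per_anchor (z i.1) (P i.1) (N i.1) (hz i.1 i.2) (hP i.1 i.2) (hN i.1 i.2)
    (hPunit i.1 i.2) (hNunit i.1 i.2) τ hτ
end

section
/- Let E be a real inner product space, let I be a finite index set, and for each i ∈ I let z_i ∈ E be a unit vector with nonempty finite sets P_i and N_i of unit vectors in E, and set A_i = P_i ∪ N_i. Suppose 0 < τ ≤ 1. With L_ref = ∑_{i ∈ I} [ min_{p ∈ P_i} (1/2)·‖z_i − p‖² − min_{n ∈ N_i} (1/2)·‖z_i − n‖² ] and L_SC = ∑_{i ∈ I} [ −(1/|P_i|) · ∑_{p ∈ P_i} log( exp(⟪z_i, p⟫ / τ) / ∑_{a ∈ A_i} exp(⟪z_i, a⟫ / τ) ) ], we have L_ref ≤ L_SC. -/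
set_option maxHeartbeats 1000000


/-- Corollary: for temperature `0 < τ ≤ 1`, the supervised contrastive loss
itself upper-bounds the refinement loss. -/
theorem refinement_loss_le_supCon_loss
    {E ι : Type*} [NormedAddCommGroup E] [InnerProductSpace ℝ E] [DecidableEq E]
    (I : Finset ι) (z : ι → E) (P N : ι → Finset E)
    (hz : ∀ i ∈ I, ‖z i‖ = 1)
    (hP : ∀ i ∈ I, (P i).Nonempty) (hN : ∀ i ∈ I, (N i).Nonempty)
    (hPunit : ∀ i ∈ I, ∀ p ∈ P i, ‖p‖ = 1)
    (hNunit : ∀ i ∈ I, ∀ n ∈ N i, ‖n‖ = 1)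
    (τ : ℝ) (hτ : 0 < τ) (hτ1 : τ ≤ 1) :
    (∑ i ∈ I.attach,
        ((P i.1).inf' (hP i.1 i.2) (fun p => (1 / 2 : ℝ) * ‖z i.1 - p‖ ^ 2)
          - (N i.1).inf' (hN i.1 i.2) (fun n => (1 / 2 : ℝ) * ‖z i.1 - n‖ ^ 2))) ≤
    ∑ i ∈ I.attach,
        (-(1 / ((P i.1).card : ℝ)) *
          ∑ p ∈ P i.1, Real.log (Real.exp ((inner ℝ (z i.1) p : ℝ) / τ) /
            ∑ a ∈ P i.1 ∪ N i.1, Real.exp ((inner ℝ (z i.1) a : ℝ) / τ))) := by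
  refine Finset.sum_le_sum fun j _ => ?_
  obtain ⟨i, hiI⟩ := j
  simp only
  set S : ℝ := ∑ a ∈ P i ∪ N i, Real.exp ((inner ℝ (z i) a : ℝ) / τ) with hSdef
  obtain ⟨p₀, hp₀⟩ := hP i hiI
  have hSpos : 0 < S :=
    Finset.sum_pos (fun a _ => Real.exp_pos _) ⟨p₀, Finset.mem_union_left _ hp₀⟩
  obtain ⟨n, hnN, hn_eq⟩ :=
    Finset.exists_mem_eq_inf' (hN i hiI) (fun n => (1 / 2 : ℝ) * ‖z i - n‖ ^ 2)
  have key : ∀ v : E, ‖v‖ = 1 →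
      (1 / 2 : ℝ) * ‖z i - v‖ ^ 2 = 1 - (inner ℝ (z i) v : ℝ) := by
    intro v hv
    have h := @norm_sub_sq_real E _ _ (z i) v
    rw [hz i hiI, hv] at h
    rw [h]; ring
  set L : ℝ := (P i).inf' (hP i hiI) (fun p => (1 / 2 : ℝ) * ‖z i - p‖ ^ 2)
      - (N i).inf' (hN i hiI) (fun n => (1 / 2 : ℝ) * ‖z i - n‖ ^ 2) with hLdef
  have hterm : ∀ p ∈ P i,
      L ≤ - Real.log (Real.exp ((inner ℝ (z i) p : ℝ) / τ) / S) := by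
    intro p hp
    have hxp : Real.exp ((inner ℝ (z i) p : ℝ) / τ) ≤ S :=
      Finset.single_le_sum (f := fun a => Real.exp ((inner ℝ (z i) a : ℝ) / τ))
        (fun a _ => (Real.exp_pos _).le) (Finset.mem_union_left _ hp)
    have hxn : Real.exp ((inner ℝ (z i) n : ℝ) / τ) ≤ S :=
      Finset.single_le_sum (f := fun a => Real.exp ((inner ℝ (z i) a : ℝ) / τ))
        (fun a _ => (Real.exp_pos _).le) (Finset.mem_union_right _ hnN)
    have hlogp : (inner ℝ (z i) p : ℝ) / τ ≤ Real.log S :=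
      (Real.le_log_iff_exp_le hSpos).mpr hxp
    have hlogn : (inner ℝ (z i) n : ℝ) / τ ≤ Real.log S :=
      (Real.le_log_iff_exp_le hSpos).mpr hxn
    have hlog : Real.log (Real.exp ((inner ℝ (z i) p : ℝ) / τ) / S)
        = (inner ℝ (z i) p : ℝ) / τ - Real.log S := by
      rw [Real.log_div (Real.exp_ne_zero _) hSpos.ne', Real.log_exp]
    rw [hlog]
    have hinfP : (P i).inf' (hP i hiI) (fun p => (1 / 2 : ℝ) * ‖z i - p‖ ^ 2)
        ≤ 1 - (inner ℝ (z i) p : ℝ) := by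
      calc (P i).inf' (hP i hiI) (fun p => (1 / 2 : ℝ) * ‖z i - p‖ ^ 2)
          ≤ (1 / 2 : ℝ) * ‖z i - p‖ ^ 2 := Finset.inf'_le _ hp
        _ = 1 - (inner ℝ (z i) p : ℝ) := key p (hPunit i hiI p hp)
    have hNval : (N i).inf' (hN i hiI) (fun n => (1 / 2 : ℝ) * ‖z i - n‖ ^ 2)
        = 1 - (inner ℝ (z i) n : ℝ) := by
      rw [hn_eq]; exact key n (hNunit i hiI n hnN)
    have h1 : (inner ℝ (z i) n : ℝ) ≤ τ * Real.log S := by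
      rw [div_le_iff₀ hτ] at hlogn
      linarith
    have h2 : (inner ℝ (z i) p : ℝ) / τ * τ = (inner ℝ (z i) p : ℝ) :=
      div_mul_cancel₀ _ hτ.ne'
    have h3 : 0 ≤ Real.log S - (inner ℝ (z i) p : ℝ) / τ := by linarith
    have h4 : τ * (Real.log S - (inner ℝ (z i) p : ℝ) / τ)
        ≤ Real.log S - (inner ℝ (z i) p : ℝ) / τ := by nlinarith
    rw [hLdef, hNval]
    nlinarith
  have hcpos : (0 : ℝ) < ((P i).card : ℝ) := by
    exact_mod_cast (hP i hiI).card_pos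
  have hsum := Finset.sum_le_sum hterm
  rw [Finset.sum_const, nsmul_eq_mul] at hsum
  have hsum' : ((P i).card : ℝ) * L
      ≤ - ∑ p ∈ P i, Real.log (Real.exp ((inner ℝ (z i) p : ℝ) / τ) / S) := by
    rw [← Finset.sum_neg_distrib]
    exact hsum
  calc L ≤ (- ∑ p ∈ P i, Real.log (Real.exp ((inner ℝ (z i) p : ℝ) / τ) / S))
        / ((P i).card : ℝ) := by
        rw [le_div_iff₀ hcpos]; linarith
    _ = -(1 / ((P i).card : ℝ)) *
        ∑ p ∈ P i, Real.log (Real.exp ((inner ℝ (z i) p : ℝ) / τ) / S) := by ring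
end
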